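/- Let N ≥ 1 and let l₁, …, l_N > 0 be real constants with Σ_α l_α = 1. Let h : ℝ → ℝ be continuously differentiable with h > 0, let u₁, …, u_N : ℝ × ℝ → ℝ be continuously differentiable in (t, x), and set ū = Σ_{α=1}^N l_α·u_α, G_{1/2} = 0 and G_{α+1/2}(t,x) = Σ_{β=1}^{α} l_β·∂_x( h·(u_β − ū) ) for α = 1, …, N (so G_{N+1/2} = 0). Define the interface velocities u_{α+1/2}(t,x) = u_α(t,x) if G_{α+1/2}(t,x) ≤ 0 and u_{α+1/2}(t,x) = u_{α+1}(t,x) if G_{α+1/2}(t,x) > 0. Suppose that for every α, ∂_t(h·u_α) + ∂_x( h·u_α·(u_α − ū) ) = (1/l_α)·( u_{α+1/2}·G_{α+1/2} − u_{α−1/2}·G_{α−1/2} ). Then the total kinetic energy satisfies, at every point, ∂_t( Σ_{α=1}^N l_α·h·(u_α)²/2 ) + ∂_x( Σ_{α=1}^N l_α·h·(u_α)²·(u_α − ū)/2 ) = −(1/2)·Σ_{α=1}^{N−1} (u_α − u_{α+1})²·|G_{α+1/2}| ≤ 0. -/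

import Mathlib

/-- smooth solutions of the baroclinic step of the multilayer
shallow water system satisfy the kinetic-energy identity
`∂_t(Σ_α l_α h u_α²/2) + ∂_x(Σ_α l_α h u_α² (u_α − ū)/2)
  = −(1/2) Σ_{α=1}^{N−1} (u_α − u_{α+1})² |G_{α+1/2}| ≤ 0`.
Here `h` is a function of `x` alone (constant in time during the baroclinic
step), `G α` stands for the mass-exchange term
`G_{α+1/2} = Σ_{β=1}^α l_β ∂_x(h (u_β − ū))` (so `G 0 = G_{1/2} = 0` as an
empty sum), and `uhalf α` for the upwind interface velocity `u_{α+1/2}`.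
Partial derivatives are expressed as `deriv` of one-variable slices. -/
theorem stmt18 (N : ℕ) (hN : 1 ≤ N)
    (l : ℕ → ℝ) (hl : ∀ α ∈ Finset.Icc 1 N, 0 < l α)
    (hlsum : ∑ α ∈ Finset.Icc 1 N, l α = 1)
    (h : ℝ → ℝ) (hreg : ContDiff ℝ 1 h) (hpos : ∀ x, 0 < h x)
    (u : ℕ → ℝ → ℝ → ℝ)
    (hureg : ∀ α ∈ Finset.Icc 1 N, ContDiff ℝ 1 (fun p : ℝ × ℝ => u α p.1 p.2))
    (ubar : ℝ → ℝ → ℝ)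
    (hubar : ∀ t x, ubar t x = ∑ α ∈ Finset.Icc 1 N, l α * u α t x)
    (G : ℕ → ℝ → ℝ → ℝ)
    (hG : ∀ α t x, G α t x = ∑ β ∈ Finset.Icc 1 α,
        l β * deriv (fun y => h y * (u β t y - ubar t y)) x)
    (uhalf : ℕ → ℝ → ℝ → ℝ)
    (huhalf : ∀ α t x, uhalf α t x = if G α t x ≤ 0 then u α t x else u (α + 1) t x)
    (mom : ∀ α ∈ Finset.Icc 1 N, ∀ t x,
      deriv (fun s => h x * u α s x) t
        + deriv (fun y => h y * u α t y * (u α t y - ubar t y)) x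
      = (1 / l α) * (uhalf α t x * G α t x - uhalf (α - 1) t x * G (α - 1) t x)) :
    ∀ t x,
      (deriv (fun s => ∑ α ∈ Finset.Icc 1 N, l α * h x * (u α s x) ^ 2 / 2) t
        + deriv (fun y => ∑ α ∈ Finset.Icc 1 N,
            l α * h y * (u α t y) ^ 2 * (u α t y - ubar t y) / 2) x
        = -(1 / 2) * ∑ α ∈ Finset.Icc 1 (N - 1),
            (u α t x - u (α + 1) t x) ^ 2 * |G α t x|)
      ∧ -(1 / 2) * (∑ α ∈ Finset.Icc 1 (N - 1),
            (u α t x - u (α + 1) t x) ^ 2 * |G α t x|) ≤ 0 := by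
  intro t x
  have hut : ∀ α ∈ Finset.Icc 1 N, HasDerivAt (fun s => u α s x) (deriv (fun s => u α s x) t) t := by
    intro α hα
    have : DifferentiableAt ℝ (fun s => u α s x) t :=
      (((hureg α hα).differentiable one_ne_zero) (t, x)).comp (g := fun p : ℝ × ℝ => u α p.1 p.2)
        (f := fun s : ℝ => (s, x)) t
        ((differentiable_id.prodMk (differentiable_const x)) t)
    exact this.hasDerivAt
  have hux : ∀ α ∈ Finset.Icc 1 N, HasDerivAt (fun y => u α t y) (deriv (fun y => u α t y) x) x := by
    intro α hα
    have : DifferentiableAt ℝ (fun y => u α t y) x :=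
      (((hureg α hα).differentiable one_ne_zero) (t, x)).comp x
        (((differentiable_const t).prodMk differentiable_id) x)
    exact this.hasDerivAt
  have hh : HasDerivAt h (deriv h x) x := ((hreg.differentiable one_ne_zero) x).hasDerivAt
  have hubar' : HasDerivAt (fun y => ubar t y)
      (∑ α ∈ Finset.Icc 1 N, l α * deriv (fun y => u α t y) x) x := by
    have he : (fun y => ubar t y) = fun y => ∑ α ∈ Finset.Icc 1 N, l α * u α t y :=
      funext fun y => hubar t y
    rw [he]
    exact HasDerivAt.fun_sum fun α hα => (hux α hα).const_mul (l α)
  have hsq_t : ∀ α ∈ Finset.Icc 1 N,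
      HasDerivAt (fun s => u α s x ^ 2) (2 * u α t x * deriv (fun s => u α s x) t) t :=
    fun α hα => by simpa using (hut α hα).fun_pow 2
  have hsq_x : ∀ α ∈ Finset.Icc 1 N,
      HasDerivAt (fun y => u α t y ^ 2) (2 * u α t x * deriv (fun y => u α t y) x) x :=
    fun α hα => by simpa using (hux α hα).fun_pow 2
  have hTt : HasDerivAt (fun s => ∑ α ∈ Finset.Icc 1 N, l α * h x * u α s x ^ 2 / 2)
      (∑ α ∈ Finset.Icc 1 N, l α * h x * (2 * u α t x * deriv (fun s => u α s x) t) / 2) t :=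
    HasDerivAt.fun_sum fun α hα => ((hsq_t α hα).const_mul (l α * h x)).div_const 2
  have hTx : HasDerivAt
      (fun y => ∑ α ∈ Finset.Icc 1 N, l α * h y * u α t y ^ 2 * (u α t y - ubar t y) / 2)
      (∑ α ∈ Finset.Icc 1 N,
        ((l α * deriv h x * u α t x ^ 2
            + l α * h x * (2 * u α t x * deriv (fun y => u α t y) x)) * (u α t x - ubar t x)
          + l α * h x * u α t x ^ 2 * (deriv (fun y => u α t y) x
              - ∑ β ∈ Finset.Icc 1 N, l β * deriv (fun y => u β t y) x)) / 2) x :=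
    HasDerivAt.fun_sum fun α hα =>
      (((hh.const_mul (l α)).mul (hsq_x α hα)).mul ((hux α hα).sub hubar')).div_const 2
  have hmass : ∀ α ∈ Finset.Icc 1 N,
      deriv (fun y => h y * u α t y * (u α t y - ubar t y)) x
        = (deriv h x * u α t x + h x * deriv (fun y => u α t y) x) * (u α t x - ubar t x)
          + h x * u α t x * (deriv (fun y => u α t y) x
              - ∑ β ∈ Finset.Icc 1 N, l β * deriv (fun y => u β t y) x) :=
    fun α hα => ((hh.mul (hux α hα)).mul ((hux α hα).sub hubar')).deriv
  have htime : ∀ α ∈ Finset.Icc 1 N,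
      deriv (fun s => h x * u α s x) t = h x * deriv (fun s => u α s x) t :=
    fun α hα => ((hut α hα).const_mul (h x)).deriv
  have mom' : ∀ α ∈ Finset.Icc 1 N,
      l α * (h x * deriv (fun s => u α s x) t
        + ((deriv h x * u α t x + h x * deriv (fun y => u α t y) x) * (u α t x - ubar t x)
          + h x * u α t x * (deriv (fun y => u α t y) x
              - ∑ β ∈ Finset.Icc 1 N, l β * deriv (fun y => u β t y) x)))
      = uhalf α t x * G α t x - uhalf (α - 1) t x * G (α - 1) t x := by
    intro α hα
    have hl0 : l α ≠ 0 := (hl α hα).ne'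
    have hm := mom α hα t x
    rw [htime α hα, hmass α hα] at hm
    rw [hm]
    field_simp
  have hGder : ∀ β ∈ Finset.Icc 1 N,
      deriv (fun y => h y * (u β t y - ubar t y)) x
        = deriv h x * (u β t x - ubar t x) + h x * (deriv (fun y => u β t y) x
            - ∑ γ ∈ Finset.Icc 1 N, l γ * deriv (fun y => u γ t y) x) :=
    fun β hβ => (hh.mul ((hux β hβ).sub hubar')).deriv
  have hG0 : G 0 t x = 0 := by rw [hG]; simp
  have hGN : G N t x = 0 := by
    have hz : ∀ y, ∑ β ∈ Finset.Icc 1 N, l β * (h y * (u β t y - ubar t y)) = 0 := by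
      intro y
      have e1 : ∀ β ∈ Finset.Icc 1 N, l β * (h y * (u β t y - ubar t y))
          = h y * (l β * u β t y) - h y * ubar t y * l β := fun β _ => by ring
      rw [Finset.sum_congr rfl e1, Finset.sum_sub_distrib, ← Finset.mul_sum, ← Finset.mul_sum,
        ← hubar, hlsum, mul_one, sub_self]
    have hs : HasDerivAt (fun y => ∑ β ∈ Finset.Icc 1 N, l β * (h y * (u β t y - ubar t y)))
        (∑ β ∈ Finset.Icc 1 N, l β * deriv (fun y => h y * (u β t y - ubar t y)) x) x :=
      HasDerivAt.fun_sum fun β hβ =>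
        ((hh.mul ((hux β hβ).sub hubar')).differentiableAt.hasDerivAt).const_mul (l β)
    rw [show (fun y => ∑ β ∈ Finset.Icc 1 N, l β * (h y * (u β t y - ubar t y))) = fun _ => (0:ℝ)
      from funext hz] at hs
    rw [hG]
    exact hs.unique (hasDerivAt_const x 0)
  have hGstep : ∀ α ∈ Finset.Icc 1 N, G α t x = G (α - 1) t x
      + l α * (deriv h x * (u α t x - ubar t x) + h x * (deriv (fun y => u α t y) x
          - ∑ γ ∈ Finset.Icc 1 N, l γ * deriv (fun y => u γ t y) x)) := by
    intro α hα
    have hα' := hα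
    rw [Finset.mem_Icc] at hα'
    obtain ⟨m, rfl⟩ : ∃ m, α = m + 1 := ⟨α - 1, by omega⟩
    simp only [hG, Nat.add_sub_cancel]
    rw [Finset.sum_Icc_succ_top (by omega : 1 ≤ m + 1)]
    rw [hGder (m + 1) hα]
  set Tl : ℕ → ℝ := fun β => u (β + 1) t x * (uhalf β t x * G β t x)
      - u (β + 1) t x ^ 2 / 2 * G β t x with hTl
  set W : ℕ → ℝ := fun β => -(1 / 2) * ((u β t x - u (β + 1) t x) ^ 2 * |G β t x|) with hW
  have htele : ∑ α ∈ Finset.Icc 1 N, (Tl α - Tl (α - 1)) = 0 := by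
    have h1 : ∑ α ∈ Finset.Icc 1 N, (Tl α - Tl (α - 1))
        = ∑ i ∈ Finset.range N, (Tl (i + 1) - Tl i) := by
      rw [← Finset.Ico_add_one_right_eq_Icc, Finset.sum_Ico_eq_sum_range]
      simp only [Nat.add_sub_cancel, Nat.succ_sub_one]
      exact Finset.sum_congr rfl fun i _ => by
        rw [show 1 + i = i + 1 from by omega, show i + 1 - 1 = i from by omega]
    rw [h1, Finset.sum_range_sub Tl N]
    have hz1 : Tl N = 0 := by rw [hTl]; simp [hGN]
    have hz0 : Tl 0 = 0 := by rw [hTl]; simp [hG0]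
    rw [hz1, hz0, sub_zero]
  have hWsum : ∑ α ∈ Finset.Icc 1 N, W α
      = -(1 / 2) * ∑ α ∈ Finset.Icc 1 (N - 1), (u α t x - u (α + 1) t x) ^ 2 * |G α t x| := by
    obtain ⟨M, rfl⟩ : ∃ M, N = M + 1 := ⟨N - 1, by omega⟩
    rw [Finset.sum_Icc_succ_top (by omega : 1 ≤ M + 1)]
    have hzW : W (M + 1) = 0 := by rw [hW]; simp [hGN]
    rw [hzW, add_zero, Finset.mul_sum]
    simp only [Nat.add_sub_cancel, hW]
  have key : ∀ α ∈ Finset.Icc 1 N,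
      l α * h x * (2 * u α t x * deriv (fun s => u α s x) t) / 2
        + ((l α * deriv h x * u α t x ^ 2
            + l α * h x * (2 * u α t x * deriv (fun y => u α t y) x)) * (u α t x - ubar t x)
          + l α * h x * u α t x ^ 2 * (deriv (fun y => u α t y) x
              - ∑ β ∈ Finset.Icc 1 N, l β * deriv (fun y => u β t y) x)) / 2
      = W α + (Tl α - Tl (α - 1)) := by
    intro α hα
    have hm := mom' α hα
    have hstep := hGstep α hα
    have hα' := hα
    rw [Finset.mem_Icc] at hα'
    obtain ⟨m, rfl⟩ : ∃ m, α = m + 1 := ⟨α - 1, by omega⟩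
    simp only [hW, hTl, Nat.add_sub_cancel] at hm hstep ⊢
    rcases le_or_gt (G (m + 1) t x) 0 with hc | hc
    · rw [huhalf (m + 1) t x, if_pos hc] at hm ⊢
      rw [abs_of_nonpos hc]
      linear_combination u (m + 1) t x * hm + u (m + 1) t x ^ 2 / 2 * hstep
    · rw [huhalf (m + 1) t x, if_neg (not_le.mpr hc)] at hm ⊢
      rw [abs_of_pos hc]
      linear_combination u (m + 1) t x * hm + u (m + 1) t x ^ 2 / 2 * hstep
  constructor
  · rw [hTt.deriv, hTx.deriv, ← Finset.sum_add_distrib, Finset.sum_congr rfl key,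
      Finset.sum_add_distrib, htele, add_zero, hWsum]
  · have hnn : 0 ≤ ∑ α ∈ Finset.Icc 1 (N - 1), (u α t x - u (α + 1) t x) ^ 2 * |G α t x| :=
      Finset.sum_nonneg fun α _ => mul_nonneg (sq_nonneg _) (abs_nonneg _)
    linarith
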